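/- arXiv:1303.1721 — 3 statements merged into one kernel-verified Lean document; each statement's English description precedes it below -/
import Mathlib

section
/- Let X be a real Banach space, let C ⊂ X be a nonempty open bounded convex set and let η > 0 be such that for every g ∈ S_{X*} and every c ∈ ℝ, if the slice C ∩ {x : g(x) < c} is nonempty then it has diameter greater than 2η. Then for every sequence (f_n) in S_{X*} and every x₀ ∈ C there exists a sequence (x_n) in C starting at x₀ such that f_n(x_{n+1} − x_n) < 0 and ‖x_{n+1} − x_n‖ ≥ η for all n ∈ ℕ. -/
theorem statement2 {X : Type*} [NormedAddCommGroup X] [NormedSpace ℝ X] [CompleteSpace X]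
    (C : Set X) (hCne : C.Nonempty) (hCopen : IsOpen C)
    (hCbdd : Bornology.IsBounded C) (hCconv : Convex ℝ C)
    (η : ℝ) (hη : 0 < η)
    (hslice : ∀ g : StrongDual ℝ X, ‖g‖ = 1 → ∀ c : ℝ,
      ({x ∈ C | g x < c}).Nonempty → 2 * η < Metric.diam {x ∈ C | g x < c})
    (f : ℕ → StrongDual ℝ X) (hf : ∀ n, ‖f n‖ = 1)
    (x₀ : X) (hx₀ : x₀ ∈ C) :
    ∃ x : ℕ → X, x 0 = x₀ ∧ (∀ n, x n ∈ C) ∧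
      ∀ n : ℕ, f n (x (n + 1) - x n) < 0 ∧ η ≤ ‖x (n + 1) - x n‖ := by
  have key : ∀ (n : ℕ) (x : X), x ∈ C → ∃ y, y ∈ C ∧ f n y < f n x ∧ η ≤ ‖y - x‖ := by
    intro n x hx
    set g := f n with hg
    have hgn : ‖g‖ = 1 := hf n
    have hgne : g ≠ 0 := by
      intro h; rw [h] at hgn; simp at hgn
    -- find v with g v > 0
    obtain ⟨v0, hv0⟩ : ∃ v, g v ≠ 0 := by
      by_contra h
      push_neg at h
      exact hgne (by ext z; simpa using h z)
    obtain ⟨v, hv⟩ : ∃ v, 0 < g v := by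
      rcases lt_or_gt_of_ne hv0 with h | h
      · exact ⟨-v0, by simpa using h⟩
      · exact ⟨v0, h⟩
    -- slice nonempty
    obtain ⟨ε, hε, hball⟩ := Metric.isOpen_iff.mp hCopen x hx
    have hne : ({z ∈ C | g z < g x}).Nonempty := by
      set t : ℝ := ε / (2 * (‖v‖ + 1)) with ht
      have hvpos : (0:ℝ) < ‖v‖ + 1 := by positivity
      have htpos : 0 < t := by positivity
      refine ⟨x - t • v, ?_, ?_⟩
      · apply hball
        rw [Metric.mem_ball, dist_eq_norm]
        have : ‖x - t • v - x‖ = t * ‖v‖ := by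
          simp [norm_smul, abs_of_pos htpos]
        rw [this, ht]
        calc ε / (2 * (‖v‖ + 1)) * ‖v‖ < ε / (2 * (‖v‖ + 1)) * (2 * (‖v‖ + 1)) := by
              apply mul_lt_mul_of_pos_left _ htpos
              nlinarith [norm_nonneg v]
          _ = ε := by field_simp
      · have : g (x - t • v) = g x - t * g v := by simp [map_sub, map_smul]
        rw [this]
        nlinarith
    have hd := hslice g hgn (g x) hne
    obtain ⟨u, hu, w, hw, huw⟩ : ∃ u ∈ {z ∈ C | g z < g x}, ∃ w ∈ {z ∈ C | g z < g x},
        2 * η < dist u w := by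
      by_contra h
      push_neg at h
      have : Metric.diam {z ∈ C | g z < g x} ≤ 2 * η :=
        Metric.diam_le_of_forall_dist_le (by positivity) h
      linarith
    rcases le_or_gt η ‖u - x‖ with h | h
    · exact ⟨u, hu.1, hu.2, h⟩
    · refine ⟨w, hw.1, hw.2, ?_⟩
      have h1 : dist u w ≤ ‖u - x‖ + ‖w - x‖ := by
        rw [dist_eq_norm]
        calc ‖u - w‖ = ‖(u - x) - (w - x)‖ := by congr 1; abel
          _ ≤ ‖u - x‖ + ‖w - x‖ := norm_sub_le _ _
      linarith
  choose Y hYC hYlt hYn using key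
  let s : ℕ → {z : X // z ∈ C} := fun n =>
    Nat.rec ⟨x₀, hx₀⟩ (fun n p => ⟨Y n p.1 p.2, hYC n p.1 p.2⟩) n
  refine ⟨fun n => (s n).1, rfl, fun n => (s n).2, fun n => ?_⟩
  have hs : (s (n + 1)).1 = Y n (s n).1 (s n).2 := rfl
  constructor
  · show f n ((s (n + 1)).1 - (s n).1) < 0
    rw [map_sub, sub_neg, hs]
    exact hYlt n (s n).1 (s n).2
  · show η ≤ ‖(s (n + 1)).1 - (s n).1‖
    rw [hs]
    exact hYn n (s n).1 (s n).2
end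

section
/- Let X be a real Banach space, D a closed convex subset of X, f̂ ∈ S_{X*} and c ∈ ℝ. Assume that S = D ∩ {x : f̂(x) < c} is bounded and that both S and D∖S are nonempty. Let M = sup{‖u‖ : u ∈ S} and, for x ∈ S, R(x) = (c − f̂(x))/(4M). If x ∈ S and g ∈ S_{X*} satisfy ‖g − f̂‖ ≤ R(x), then (D∖S) ∩ {y : g(y) ≤ g(x)} = ∅. -/
theorem statement3 {X : Type*} [NormedAddCommGroup X] [NormedSpace ℝ X] [CompleteSpace X]
    (D : Set X) (hDcl : IsClosed D) (hDconv : Convex ℝ D)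
    (fhat : StrongDual ℝ X) (hfhat : ‖fhat‖ = 1) (c : ℝ)
    (S : Set X) (hS : S = {x ∈ D | fhat x < c})
    (hSbdd : Bornology.IsBounded S) (hSne : S.Nonempty) (hDSne : (D \ S).Nonempty)
    (M : ℝ) (hM : M = sSup ((fun u => ‖u‖) '' S))
    (x : X) (hx : x ∈ S)
    (g : StrongDual ℝ X) (hg : ‖g‖ = 1)
    (hgf : ‖g - fhat‖ ≤ (c - fhat x) / (4 * M)) :
    (D \ S) ∩ {y | g y ≤ g x} = ∅ := by
  rw [Set.eq_empty_iff_forall_notMem]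
  rintro y ⟨⟨hyD, hyS⟩, hgy⟩
  simp only [Set.mem_setOf_eq] at hgy
  have hxD : x ∈ D := by rw [hS] at hx; exact hx.1
  have hfx : fhat x < c := by rw [hS] at hx; exact hx.2
  have hfy : c ≤ fhat y := by
    by_contra h
    exact hyS (by rw [hS]; exact ⟨hyD, by linarith⟩)
  -- norms of elements of S are bounded above by M
  obtain ⟨C, hC⟩ := hSbdd.exists_norm_le
  have hbdd : BddAbove ((fun u => ‖u‖) '' S) := by
    refine ⟨C, ?_⟩
    rintro r ⟨u, hu, rfl⟩
    exact hC u hu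
  have hnorm : ∀ u ∈ S, ‖u‖ ≤ M := by
    intro u hu
    rw [hM]
    exact le_csSup hbdd ⟨u, hu, rfl⟩
  have hM0 : 0 ≤ M := le_trans (norm_nonneg x) (hnorm x hx)
  set δ : ℝ := (c - fhat x) / 4 with hδdef
  have hδ : 0 < δ := by
    have : 0 < c - fhat x := by linarith
    positivity
  set ε : ℝ := ‖g - fhat‖ with hεdef
  have hε0 : 0 ≤ ε := norm_nonneg _
  have hεM : ε * M ≤ δ := by
    rcases eq_or_lt_of_le hM0 with hM0' | hM0'
    · nlinarith
    · have h1 : ε * M ≤ (c - fhat x) / (4 * M) * M :=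
        mul_le_mul_of_nonneg_right hgf hM0
      have h2 : (c - fhat x) / (4 * M) * M = δ := by
        rw [hδdef]; field_simp
      linarith
  -- construct z on segment [x, y] with fhat z = c - δ
  set t : ℝ := (c - δ - fhat x) / (fhat y - fhat x) with htdef
  have hden : 0 < fhat y - fhat x := by linarith
  have ht0 : 0 < t := by
    apply div_pos _ hden
    linarith
  have ht1 : t ≤ 1 := by
    rw [div_le_one hden]
    linarith
  set z : X := (1 - t) • x + t • y with hzdef
  have hzD : z ∈ D := hDconv hxD hyD (by linarith) (le_of_lt ht0) (by ring)
  have hfz : fhat z = c - δ := by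
    rw [hzdef]
    simp only [map_add, map_smul, smul_eq_mul]
    rw [htdef]; field_simp [hden.ne']
    ring
  have hzS : z ∈ S := by
    rw [hS]
    exact ⟨hzD, by rw [hfz]; linarith⟩
  have hzM : ‖z‖ ≤ M := hnorm z hzS
  have hxM : ‖x‖ ≤ M := hnorm x hx
  have hgz : g z ≤ g x := by
    rw [hzdef]
    simp only [map_add, map_smul, smul_eq_mul]
    nlinarith
  -- perturbation bounds
  have hbz : |g z - fhat z| ≤ ε * M := by
    have := (g - fhat).le_opNorm z
    rw [Real.norm_eq_abs] at this
    simp only [ContinuousLinearMap.sub_apply] at this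
    calc |g z - fhat z| ≤ ε * ‖z‖ := this
      _ ≤ ε * M := by nlinarith
  have hbx : |g x - fhat x| ≤ ε * M := by
    have := (g - fhat).le_opNorm x
    rw [Real.norm_eq_abs] at this
    simp only [ContinuousLinearMap.sub_apply] at this
    calc |g x - fhat x| ≤ ε * ‖x‖ := this
      _ ≤ ε * M := by nlinarith
  rw [abs_le] at hbz hbx
  -- contradiction: c - δ - εM ≤ g z ≤ g x ≤ fhat x + εM
  have : c - fhat x ≤ 3 * δ := by linarith [hbz.1, hbx.2]
  rw [hδdef] at this
  linarith
end

section
/- Let X be a real Banach space, f ∈ S_{X*}, 0 < ε < 1, p ∈ ℤ and η > 0. Let μ be an ordinal and (f_α)_{α<μ} in X* with ‖f_α − f‖ < ε, (c_α)_{α<μ} in ℝ be such that, with D_α = Λ_p ∩ ⋂_{γ<α} {x : f_γ(x) ≥ c_γ} for α ≤ μ and C_α = D_α ∩ {x : f_α(x) < c_α} for α < μ, each C_α is nonempty and bounded with diam C_α < η, D_μ = Λ_{p+1}, and {C_α : α < μ} is a partition of Λ_p ∖ Λ_{p+1}. For x ∈ C_α set R(x) = (c_α − f_α(x)) / (4·sup{‖u‖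 : u ∈ C_α}). Then every map t : Λ_p ∖ Λ_{p+1} → X* satisfying t(x) ∈ S_{X*} ∩ B(f,ε) ∩ B̄(f_α, R(x)) whenever x ∈ C_α has the properties: (i) if x ∈ Λ_p ∖ Λ_{p+1} and y ∈ X satisfy ⟨t(x), y − x⟩ ≤ 0, then y ∉ Λ_{p+1}; and (ii) every sequence (x_n) in Λ_p ∖ Λ_{p+1} with ⟨t(x_n), x_{n+1} − x_n⟩ ≤ 0 for all n ∈ ℕ is η-Cauchy. -/
set_option maxHeartbeats 1000000 in
theorem statement12 {X : Type*} [NormedAddCommGroup X] [NormedSpace ℝ X] [CompleteSpace X]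
    (f : StrongDual ℝ X) (hf : ‖f‖ = 1)
    (ε : ℝ) (hε0 : 0 < ε) (hε1 : ε < 1) (p : ℤ) (η : ℝ) (hη : 0 < η)
    (μ : Ordinal) (fα : Ordinal → StrongDual ℝ X) (cα : Ordinal → ℝ)
    (hfα : ∀ α < μ, ‖fα α - f‖ < ε)
    (Λp Λp1 : Set X)
    (hΛp : Λp = {x : X | f x ≥ ε * ‖x‖ + (p : ℝ)})
    (hΛp1 : Λp1 = {x : X | f x ≥ ε * ‖x‖ + ((p : ℝ) + 1)})
    (D : Ordinal → Set X)
    (hD : ∀ α, D α = Λp ∩ ⋂ γ ∈ Set.Iio α, {x : X | cα γ ≤ fα γ x})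
    (C : Ordinal → Set X)
    (hC : ∀ α, C α = D α ∩ {x : X | fα α x < cα α})
    (hCne : ∀ α < μ, (C α).Nonempty)
    (hCbdd : ∀ α < μ, Bornology.IsBounded (C α))
    (hCdiam : ∀ α < μ, Metric.diam (C α) < η)
    (hDμ : D μ = Λp1)
    (hdisj : ∀ α < μ, ∀ β < μ, α ≠ β → C α ∩ C β = ∅)
    (hcover : (⋃ α ∈ Set.Iio μ, C α) = Λp \ Λp1)
    (R : X → ℝ)
    (hR : ∀ α < μ, ∀ x ∈ C α, R x = (cα α - fα α x) / (4 * sSup ((fun u => ‖u‖) '' C α)))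
    (t : X → StrongDual ℝ X)
    (ht : ∀ α < μ, ∀ x ∈ C α, ‖t x‖ = 1 ∧ ‖f - t x‖ < ε ∧ ‖t x - fα α‖ ≤ R x) :
    (∀ x ∈ Λp \ Λp1, ∀ y : X, t x (y - x) ≤ 0 → y ∉ Λp1) ∧
    (∀ xs : ℕ → X, (∀ n, xs n ∈ Λp \ Λp1) →
      (∀ n : ℕ, t (xs n) (xs (n + 1) - xs n) ≤ 0) →
      ∃ n₀ : ℕ, ∀ n ≥ n₀, ∀ m ≥ n₀, ‖xs n - xs m‖ < η) := by
  -- The key lemma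
  have key : ∀ a, a < μ → ∀ x, x ∈ C a → ∀ y, y ∈ Λp →
      (∀ γ, γ ≤ a → cα γ ≤ fα γ y) → ¬ (t x (y - x) ≤ 0) := by
    intro a ha x hx y hyΛ hyγ h0
    obtain ⟨hxD, hxlt⟩ : x ∈ D a ∧ fα a x < cα a := by rw [hC] at hx; exact hx
    obtain ⟨hxΛ, hxI⟩ : x ∈ Λp ∧ x ∈ ⋂ γ ∈ Set.Iio a, {x : X | cα γ ≤ fα γ x} := by
      rw [hD] at hxD; exact hxD
    have hxγ : ∀ γ, γ < a → cα γ ≤ fα γ x := by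
      intro γ hγ
      have := Set.mem_iInter₂.1 hxI γ hγ
      exact this
    obtain ⟨ht1, ht2, ht3⟩ := ht a ha x hx
    have hRx := hR a ha x hx
    set S : ℝ := sSup ((fun u => ‖u‖) '' C a) with hSdef
    set δ : ℝ := cα a - fα a x with hδdef
    have hδpos : 0 < δ := sub_pos.2 hxlt
    -- norms bounded by S
    have hbdd : BddAbove ((fun u => ‖u‖) '' C a) := by
      obtain ⟨r, hr⟩ := (hCbdd a ha).exists_norm_le
      exact ⟨r, by rintro _ ⟨u, hu, rfl⟩; exact hr u hu⟩
    have hnorm_le : ∀ u ∈ C a, ‖u‖ ≤ S := fun u hu => le_csSup hbdd ⟨u, hu, rfl⟩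
    have hxS : ‖x‖ ≤ S := hnorm_le x hx
    have hS0 : 0 ≤ S := le_trans (norm_nonneg x) hxS
    set F : ℝ := fα a y - fα a x with hFdef
    have hFδ : δ ≤ F := by
      have := hyγ a le_rfl
      simp only [hδdef, hFdef]
      linarith
    have hFpos : 0 < F := lt_of_lt_of_le hδpos hFδ
    have hFne : F ≠ 0 := ne_of_gt hFpos
    set n : ℝ := ‖y - x‖ with hndef
    have hn0 : 0 ≤ n := norm_nonneg _
    -- main estimate : F ≤ R x * n
    have hE : F ≤ R x * n := by
      have e1 : (fα a - t x) (y - x) ≤ ‖fα a - t x‖ * n := by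
        refine le_trans (le_abs_self _) ?_
        have := (fα a - t x).le_opNorm (y - x)
        simpa [Real.norm_eq_abs] using this
      have e2 : ‖fα a - t x‖ ≤ R x := by rw [norm_sub_rev]; exact ht3
      have e3 : ‖fα a - t x‖ * n ≤ R x * n := mul_le_mul_of_nonneg_right e2 hn0
      have e4 : fα a (y - x) = F := by rw [map_sub]
      have e5 : (fα a - t x) (y - x) = fα a (y - x) - t x (y - x) := by
        simp [ContinuousLinearMap.sub_apply]
      linarith
    rcases eq_or_lt_of_le hS0 with hS0' | hSpos
    · -- S = 0 : then R x = 0 and F ≤ 0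
      have : R x = 0 := by rw [hRx, ← hS0', mul_zero, div_zero]
      rw [this, zero_mul] at hE
      linarith
    · -- main case S > 0
      set lam : ℝ := 1 - 3 * δ / (4 * F) with hlamdef
      have hquot_pos : 0 < 3 * δ / (4 * F) := by positivity
      have hquot_le : 3 * δ / (4 * F) ≤ 3 / 4 := by
        rw [div_le_div_iff₀ (by positivity) (by norm_num)]
        nlinarith
      have hlam0 : 0 ≤ lam := by simp only [hlamdef]; linarith
      have hlam1 : lam < 1 := by simp only [hlamdef]; linarith
      set u : X := (1 - lam) • y + lam • x with hudef
      -- fα a u = fα a x + 3δ/4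
      have hfa_u : fα a u = (1 - lam) * fα a y + lam * fα a x := by
        simp [hudef, map_add, map_smul, smul_eq_mul]
      have hfau : fα a u = fα a x + 3 * δ / 4 := by
        rw [hfa_u]
        have hfy : fα a y = fα a x + F := by rw [hFdef]; ring
        rw [hfy, hlamdef]
        field_simp
        ring
      -- u ∈ C a
      have huC : u ∈ C a := by
        rw [hC]
        refine ⟨?_, ?_⟩
        · rw [hD]
          refine ⟨?_, ?_⟩
          · -- u ∈ Λp
            rw [hΛp]
            simp only [Set.mem_setOf_eq, ge_iff_le]
            have hfy : f y ≥ ε * ‖y‖ + (p : ℝ) := by rw [hΛp] at hyΛ; exact hyΛ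
            have hfx : f x ≥ ε * ‖x‖ + (p : ℝ) := by rw [hΛp] at hxΛ; exact hxΛ
            have hun : ‖u‖ ≤ (1 - lam) * ‖y‖ + lam * ‖x‖ := by
              calc ‖u‖ ≤ ‖(1 - lam) • y‖ + ‖lam • x‖ := norm_add_le _ _
                _ = (1 - lam) * ‖y‖ + lam * ‖x‖ := by
                    rw [norm_smul, norm_smul, Real.norm_eq_abs, Real.norm_eq_abs,
                      abs_of_nonneg (by linarith), abs_of_nonneg hlam0]
            have hfu : f u = (1 - lam) * f y + lam * f x := by
              simp [hudef, map_add, map_smul, smul_eq_mul]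
            have a1 : (1 - lam) * (f y - (ε * ‖y‖ + (p : ℝ))) ≥ 0 :=
              mul_nonneg (by linarith) (by linarith)
            have a2 : lam * (f x - (ε * ‖x‖ + (p : ℝ))) ≥ 0 :=
              mul_nonneg hlam0 (by linarith)
            have a3 : ε * ((1 - lam) * ‖y‖ + lam * ‖x‖ - ‖u‖) ≥ 0 :=
              mul_nonneg (le_of_lt hε0) (by linarith)
            linarith [a1, a2, a3, hfu]
          · -- earlier constraints
            simp only [Set.mem_iInter, Set.mem_setOf_eq, Set.mem_Iio]
            intro γ hγ
            have h1 := hxγ γ hγ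
            have h2 := hyγ γ (le_of_lt hγ)
            have hfu : fα γ u = (1 - lam) * fα γ y + lam * fα γ x := by
              simp [hudef, map_add, map_smul, smul_eq_mul]
            have b1 : (0:ℝ) ≤ (1 - lam) * (fα γ y - cα γ) :=
              mul_nonneg (by linarith) (by linarith)
            have b2 : (0:ℝ) ≤ lam * (fα γ x - cα γ) :=
              mul_nonneg hlam0 (by linarith)
            linarith [b1, b2, hfu]
        · simp only [Set.mem_setOf_eq]
          rw [hfau]
          simp only [hδdef]
          linarith
      have huS : ‖u‖ ≤ S := hnorm_le u huC
      -- lower bound on ‖u‖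
      have hul : (1 - lam) * ‖y‖ - lam * ‖x‖ ≤ ‖u‖ := by
        have h7 : ‖(1 - lam) • y‖ ≤ ‖u‖ + ‖lam • x‖ := by
          have heq : (1 - lam) • y = u - lam • x := by
            rw [hudef]; abel
          rw [heq]
          exact norm_sub_le _ _
        rw [norm_smul, norm_smul, Real.norm_eq_abs, Real.norm_eq_abs,
          abs_of_nonneg (by linarith), abs_of_nonneg hlam0] at h7
        linarith
      -- (1-lam) * n ≥ 3 S
      have h4 : 4 * S * F ≤ δ * n := by
        have h5 : F ≤ δ / (4 * S) * n := by
          rw [hRx] at hE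
          exact hE
        have h6 : 4 * S * (δ / (4 * S) * n) = δ * n := by
          field_simp
        nlinarith [mul_le_mul_of_nonneg_left h5 (by positivity : (0:ℝ) ≤ 4 * S)]
      have h3 : 3 * S ≤ (1 - lam) * n := by
        have hl : (1 - lam) = 3 * δ / (4 * F) := by rw [hlamdef]; ring
        rw [hl, div_mul_eq_mul_div, le_div_iff₀ (by positivity)]
        nlinarith
      have t1 : n - ‖x‖ ≤ ‖y‖ := by
        have := norm_sub_le y x
        simp only [hndef]
        linarith
      have t2 : (1 - lam) * (n - ‖x‖) ≤ (1 - lam) * ‖y‖ :=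
        mul_le_mul_of_nonneg_left t1 (by linarith)
      -- conclude : 2S ≤ ‖u‖ ≤ S, contradiction with S > 0
      nlinarith [hul, t2, h3, hxS, huS, norm_nonneg x]
  constructor
  · -- part (i)
    intro x hx y hle hy1
    rw [← hcover] at hx
    obtain ⟨a, ha, hxC⟩ : ∃ a, a ∈ Set.Iio μ ∧ x ∈ C a := by
      simpa using Set.mem_iUnion₂.1 hx
    have ha' : a < μ := ha
    have hyD : y ∈ D μ := by rw [hDμ]; exact hy1
    obtain ⟨hyΛ, hyI⟩ : y ∈ Λp ∧ y ∈ ⋂ γ ∈ Set.Iio μ, {x : X | cα γ ≤ fα γ x} := by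
      rw [hD] at hyD; exact hyD
    exact key a ha' x hxC y hyΛ
      (fun γ hγ => Set.mem_iInter₂.1 hyI γ (lt_of_le_of_lt hγ ha')) hle
  · -- part (ii)
    intro xs hxs hdec
    have hex : ∀ n : ℕ, ∃ a, a < μ ∧ xs n ∈ C a := by
      intro n
      have h := hxs n
      rw [← hcover] at h
      obtain ⟨a, ha, hm⟩ := Set.mem_iUnion₂.1 h
      exact ⟨a, ha, hm⟩
    choose A hAlt hAC using hex
    have hstep : ∀ n : ℕ, A (n + 1) ≤ A n := by
      intro n
      by_contra hlt
      push_neg at hlt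
      have hy : xs (n + 1) ∈ D (A (n + 1)) := by
        have := hAC (n + 1)
        rw [hC] at this
        exact this.1
      obtain ⟨hyΛ, hyI⟩ : xs (n + 1) ∈ Λp ∧
          xs (n + 1) ∈ ⋂ γ ∈ Set.Iio (A (n + 1)), {x : X | cα γ ≤ fα γ x} := by
        rw [hD] at hy; exact hy
      exact key (A n) (hAlt n) (xs n) (hAC n) (xs (n + 1)) hyΛ
        (fun γ hγ => Set.mem_iInter₂.1 hyI γ (lt_of_le_of_lt hγ hlt)) (hdec n)
    have hchain : ∀ n m : ℕ, n ≤ m → A m ≤ A n := by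
      intro n m h
      induction m, h using Nat.le_induction with
      | base => exact le_rfl
      | succ m hm ih => exact le_trans (hstep m) ih
    obtain ⟨b, hbmem, hmin⟩ := Ordinal.lt_wf.has_min (Set.range A) ⟨A 0, 0, rfl⟩
    obtain ⟨n₀, hbn⟩ := hbmem
    have hconst : ∀ n, n₀ ≤ n → A n = A n₀ := by
      intro n hn
      refine le_antisymm (hchain n₀ n hn) ?_
      have hmn := hmin (A n) ⟨n, rfl⟩
      rw [← hbn] at hmn
      exact not_lt.1 hmn
    refine ⟨n₀, fun n hn m hm => ?_⟩
    have h1 : xs n ∈ C (A n₀) := (hconst n hn) ▸ hAC n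
    have h2 : xs m ∈ C (A n₀) := (hconst m hm) ▸ hAC m
    have h3 := Metric.dist_le_diam_of_mem (hCbdd _ (hAlt n₀)) h1 h2
    rw [dist_eq_norm] at h3
    exact lt_of_le_of_lt h3 (hCdiam _ (hAlt n₀))
end
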